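/- Existence of Nash equilibrium in finite two-player zero-sum games via minimax (von Neumann minimax theorem): for any real m × n payoff matrix A, max over mixed strategies x of the minimum over mixed strategies y of xᵀAy equals min over y of max over x of xᵀAy. -/

import Mathlib

open scoped Matrix
open Finset

namespace VNM

variable {p q : ℕ}

lemma simplex_le_one {x : Fin p → ℝ} (hx : x ∈ stdSimplex ℝ (Fin p)) (i : Fin p) : x i ≤ 1 := by
  calc x i ≤ ∑ j, x j := Finset.single_le_sum (fun j _ => hx.1 j) (mem_univ i)
  _ = 1 := hx.2

lemma payoff_abs_le (B : Matrix (Fin p) (Fin q) ℝ) {x : Fin p → ℝ} {y : Fin q → ℝ}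
    (hx : x ∈ stdSimplex ℝ (Fin p)) (hy : y ∈ stdSimplex ℝ (Fin q)) :
    |x ⬝ᵥ B.mulVec y| ≤ ∑ i, ∑ j, |B i j| := by
  have h1 : |x ⬝ᵥ B.mulVec y| ≤ ∑ i, |x i * (B.mulVec y) i| := by
    rw [dotProduct]
    exact Finset.abs_sum_le_sum_abs _ _
  refine h1.trans (Finset.sum_le_sum fun i _ => ?_)
  rw [abs_mul]
  have hxi : |x i| ≤ 1 := by
    rw [abs_of_nonneg (hx.1 i)]; exact simplex_le_one hx i
  have h2 : |(B.mulVec y) i| ≤ ∑ j, |B i j| := by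
    have : |(B.mulVec y) i| ≤ ∑ j, |B i j * y j| := by
      rw [Matrix.mulVec, dotProduct]
      exact Finset.abs_sum_le_sum_abs _ _
    refine this.trans (Finset.sum_le_sum fun j _ => ?_)
    rw [abs_mul]
    have : |y j| ≤ 1 := by rw [abs_of_nonneg (hy.1 j)]; exact simplex_le_one hy j
    calc |B i j| * |y j| ≤ |B i j| * 1 := mul_le_mul_of_nonneg_left this (abs_nonneg _)
      _ = |B i j| := mul_one _
  calc |x i| * |(B.mulVec y) i| ≤ 1 * (∑ j, |B i j|) :=
        mul_le_mul hxi h2 (abs_nonneg _) zero_le_one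
    _ = ∑ j, |B i j| := one_mul _

/-- `x ⬝ᵥ z` is at most the max coordinate of `z`, for `x` in the simplex. -/
lemma dot_le_of_forall_lt [NeZero p] {x z : Fin p → ℝ} (hx : x ∈ stdSimplex ℝ (Fin p))
    {v : ℝ} (hz : ∀ i, z i < v) : x ⬝ᵥ z ≤ Finset.univ.sup' univ_nonempty z := by
  set c := Finset.univ.sup' univ_nonempty z with hc
  calc x ⬝ᵥ z = ∑ i, x i * z i := rfl
    _ ≤ ∑ i, x i * c := Finset.sum_le_sum fun i _ =>
        mul_le_mul_of_nonneg_left (Finset.le_sup' z (mem_univ i)) (hx.1 i)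
    _ = (∑ i, x i) * c := by rw [Finset.sum_mul]
    _ = c := by rw [hx.2, one_mul]

/-- Key step: there is a mixed strategy `x₀` guaranteeing at least the value
`inf_y sup_x x ⬝ A y`. -/
lemma exists_good_row (hp : 0 < p) (hq : 0 < q) (B : Matrix (Fin p) (Fin q) ℝ) :
    ∃ x₀ : stdSimplex ℝ (Fin p), ∀ y : stdSimplex ℝ (Fin q),
      (⨅ y' : stdSimplex ℝ (Fin q), ⨆ x : stdSimplex ℝ (Fin p),
        (x : Fin p → ℝ) ⬝ᵥ B.mulVec (y' : Fin q → ℝ)) ≤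
      (x₀ : Fin p → ℝ) ⬝ᵥ B.mulVec (y : Fin q → ℝ) := by
  haveI : NeZero p := ⟨hp.ne'⟩
  haveI : NeZero q := ⟨hq.ne'⟩
  haveI hPne : Nonempty (stdSimplex ℝ (Fin p)) :=
    ⟨⟨Pi.single ⟨0, hp⟩ 1, single_mem_stdSimplex ℝ _⟩⟩
  haveI hQne : Nonempty (stdSimplex ℝ (Fin q)) :=
    ⟨⟨Pi.single ⟨0, hq⟩ 1, single_mem_stdSimplex ℝ _⟩⟩
  set M : ℝ := ∑ i, ∑ j, |B i j| with hM
  have hbound : ∀ (x : stdSimplex ℝ (Fin p)) (y : stdSimplex ℝ (Fin q)),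
      |(x : Fin p → ℝ) ⬝ᵥ B.mulVec (y : Fin q → ℝ)| ≤ M :=
    fun x y => payoff_abs_le B x.2 y.2
  have hbddA : ∀ y : stdSimplex ℝ (Fin q),
      BddAbove (Set.range fun x : stdSimplex ℝ (Fin p) =>
        (x : Fin p → ℝ) ⬝ᵥ B.mulVec (y : Fin q → ℝ)) := by
    intro y
    exact ⟨M, by rintro _ ⟨x, rfl⟩; exact (abs_le.mp (hbound x y)).2⟩
  have hbddB : BddBelow (Set.range fun y : stdSimplex ℝ (Fin q) =>
      ⨆ x : stdSimplex ℝ (Fin p), (x : Fin p → ℝ) ⬝ᵥ B.mulVec (y : Fin q → ℝ)) := by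
    refine ⟨-M, ?_⟩
    rintro _ ⟨y, rfl⟩
    calc (-M : ℝ) ≤ (Classical.arbitrary (stdSimplex ℝ (Fin p)) : Fin p → ℝ) ⬝ᵥ
          B.mulVec (y : Fin q → ℝ) := (abs_le.mp (hbound _ y)).1
      _ ≤ _ := le_ciSup (hbddA y) _
  set v : ℝ := ⨅ y' : stdSimplex ℝ (Fin q), ⨆ x : stdSimplex ℝ (Fin p),
      (x : Fin p → ℝ) ⬝ᵥ B.mulVec (y' : Fin q → ℝ) with hv
  -- the open convex set
  set C : Set (Fin p → ℝ) := {z | ∀ i, z i < v} with hC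
  set K : Set (Fin p → ℝ) := B.mulVecLin '' stdSimplex ℝ (Fin q) with hK
  have hCopen : IsOpen C := by
    have : C = ⋂ i, {z : Fin p → ℝ | z i < v} := by
      ext z; simp [hC]
    rw [this]
    exact isOpen_iInter_of_finite fun i =>
      isOpen_lt (continuous_apply i) continuous_const
  have hCconv : Convex ℝ C := by
    have : C = ⋂ i, {z : Fin p → ℝ | z i < v} := by ext z; simp [hC]
    rw [this]
    exact convex_iInter fun i =>
      convex_halfSpace_lt ⟨fun a b => rfl, fun c a => rfl⟩ v
  have hKconv : Convex ℝ K := (convex_stdSimplex ℝ (Fin q)).linear_image _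
  have hdisj : Disjoint C K := by
    rw [Set.disjoint_left]
    rintro z hzC ⟨y, hy, rfl⟩
    have h1 : v ≤ ⨆ x : stdSimplex ℝ (Fin p),
        (x : Fin p → ℝ) ⬝ᵥ B.mulVec ((⟨y, hy⟩ : stdSimplex ℝ (Fin q)) : Fin q → ℝ) :=
      ciInf_le hbddB (⟨y, hy⟩ : stdSimplex ℝ (Fin q))
    have h2 : (⨆ x : stdSimplex ℝ (Fin p),
        (x : Fin p → ℝ) ⬝ᵥ B.mulVec ((⟨y, hy⟩ : stdSimplex ℝ (Fin q)) : Fin q → ℝ)) ≤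
        Finset.univ.sup' univ_nonempty (B.mulVecLin y) :=
      ciSup_le fun x => dot_le_of_forall_lt x.2 hzC
    have h3 : Finset.univ.sup' univ_nonempty (B.mulVecLin y) < v := by
      rw [Finset.sup'_lt_iff]
      exact fun i _ => hzC i
    exact absurd ((h1.trans h2).trans_lt h3) (lt_irrefl v)
  obtain ⟨g, u, hCu, huK⟩ := geometric_hahn_banach_open hCconv hCopen hKconv hdisj
  set c : Fin p → ℝ := fun i => g (Pi.single i 1) with hcdef
  have hdec : ∀ z : Fin p → ℝ, g z = ∑ i, z i * c i := by
    intro z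
    have hz : z = ∑ i, z i • (Pi.single i (1 : ℝ) : Fin p → ℝ) := by
      funext j
      rw [Finset.sum_apply]
      simp [Pi.single_apply, mul_ite, Finset.sum_ite_eq]
    conv_lhs => rw [hz]
    rw [map_sum]
    simp_rw [map_smul, smul_eq_mul]
    rfl
  have hsingle : ∀ i, (∑ j, ((Pi.single i (1:ℝ) : Fin p → ℝ) j) * c j) = c i := by
    intro i
    simp [Pi.single_apply, ite_mul]
  set S : ℝ := ∑ i, c i with hSdef
  have hconstmem : ∀ w : ℝ, w < v → (fun _ : Fin p => w) ∈ C := fun w hw i => hw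
  have hconst : ∀ w : ℝ, g (fun _ => w) = w * S := by
    intro w
    rw [hdec]
    simp [hSdef, Finset.mul_sum]
  have hc : ∀ i, 0 ≤ c i := by
    intro i
    by_contra hneg
    push_neg at hneg
    set t : ℝ := (u - (v - 1) * S + 1) / (-c i) with ht
    have hgc : (v - 1) * S < u := by
      have := hCu _ (hconstmem (v - 1) (by linarith))
      rwa [hconst] at this
    have htpos : 0 < t := div_pos (by linarith) (by linarith)
    set z : Fin p → ℝ := fun j => (v - 1) - t * (Pi.single i (1:ℝ) : Fin p → ℝ) j with hzdef
    have hzC : z ∈ C := by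
      intro j
      have h0 : (0:ℝ) ≤ (Pi.single i (1:ℝ) : Fin p → ℝ) j := by
        rcases eq_or_ne j i with h | h <;> simp [Pi.single_apply, h]
      have : (0:ℝ) ≤ t * (Pi.single i (1:ℝ) : Fin p → ℝ) j := mul_nonneg htpos.le h0
      simp only [hzdef]
      linarith
    have hgz : g z = (v - 1) * S - t * c i := by
      rw [hdec]
      simp only [hzdef, sub_mul]
      rw [Finset.sum_sub_distrib]
      congr 1
      · simp [hSdef, Finset.mul_sum]
      · simp_rw [mul_assoc]
        rw [← Finset.mul_sum, hsingle i]
    have hne : -c i ≠ 0 := by linarith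
    have htc1 : t * (-c i) = u - (v - 1) * S + 1 := div_mul_cancel₀ _ hne
    have htc : t * c i = -(u - (v - 1) * S + 1) := by linarith [htc1]
    have hlt := hCu z hzC
    rw [hgz, htc] at hlt
    linarith
  have hSnonneg : 0 ≤ S := Finset.sum_nonneg fun i _ => hc i
  have hS : 0 < S := by
    rcases hSnonneg.lt_or_eq with h | h
    · exact h
    · exfalso
      have hczero : ∀ i ∈ Finset.univ, c i = 0 :=
        (Finset.sum_eq_zero_iff_of_nonneg fun i _ => hc i).mp h.symm
      have hgzero : ∀ z : Fin p → ℝ, g z = 0 := by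
        intro z
        rw [hdec]
        exact Finset.sum_eq_zero fun i _ => by rw [hczero i (mem_univ i), mul_zero]
      have h1 : (0:ℝ) < u := by
        have := hCu _ (hconstmem (v - 1) (by linarith))
        rwa [hgzero] at this
      obtain ⟨y⟩ := hQne
      have h2 : u ≤ 0 := by
        have := huK _ ⟨(y : Fin q → ℝ), y.2, rfl⟩
        rwa [hgzero] at this
      linarith
  have huv : v * S ≤ u := by
    by_contra h
    push_neg at h
    set w : ℝ := (u / S + v) / 2 with hwdef
    have hw : w < v := by
      have : u / S < v := (div_lt_iff₀ hS).mpr (by linarith)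
      simp only [hwdef]
      linarith
    have hlt := hCu _ (hconstmem w hw)
    rw [hconst] at hlt
    have hwS : w * S = (u + v * S) / 2 := by
      rw [hwdef]
      field_simp
    linarith
  have hx₀mem : S⁻¹ • c ∈ stdSimplex ℝ (Fin p) := by
    constructor
    · intro i
      exact mul_nonneg (inv_nonneg.mpr hS.le) (hc i)
    · simp only [Pi.smul_apply, smul_eq_mul]
      rw [← Finset.mul_sum, ← hSdef, inv_mul_cancel₀ hS.ne']
  refine ⟨⟨S⁻¹ • c, hx₀mem⟩, fun y => ?_⟩
  have h1 : u ≤ g (B.mulVec (y : Fin q → ℝ)) := huK _ ⟨(y : Fin q → ℝ), y.2, rfl⟩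
  have hdot : (S⁻¹ • c) ⬝ᵥ B.mulVec (y : Fin q → ℝ) =
      S⁻¹ * g (B.mulVec (y : Fin q → ℝ)) := by
    rw [hdec, dotProduct, Finset.mul_sum]
    exact Finset.sum_congr rfl fun i _ => by simp [smul_eq_mul]; ring
  show v ≤ (S⁻¹ • c) ⬝ᵥ B.mulVec (y : Fin q → ℝ)
  rw [hdot]
  rw [← div_eq_inv_mul]
  rw [le_div_iff₀ hS]
  exact huv.trans h1

lemma mySup_neg {ι : Sort*} [Nonempty ι] (f : ι → ℝ) (hb : BddBelow (Set.range f)) :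
    (⨆ i, -f i) = -⨅ i, f i := by
  have hba : BddAbove (Set.range fun i => -f i) := by
    obtain ⟨b, hbb⟩ := hb
    exact ⟨-b, by rintro _ ⟨i, rfl⟩; exact neg_le_neg (hbb ⟨i, rfl⟩)⟩
  apply le_antisymm
  · exact ciSup_le fun i => neg_le_neg (ciInf_le hb i)
  · rw [neg_le]
    exact le_ciInf fun i => neg_le.mpr (le_ciSup hba i)

lemma myInf_neg {ι : Sort*} [Nonempty ι] (f : ι → ℝ) (hb : BddAbove (Set.range f)) :
    (⨅ i, -f i) = -⨆ i, f i := by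
  have hbb : BddBelow (Set.range fun i => -f i) := by
    obtain ⟨b, hbb⟩ := hb
    exact ⟨-b, by rintro _ ⟨i, rfl⟩; exact neg_le_neg (hbb ⟨i, rfl⟩)⟩
  have h := mySup_neg (fun i => -f i) hbb
  simp only [neg_neg] at h
  linarith

end VNM

open VNM

/-- Von Neumann's minimax theorem for finite two-player zero-sum games:
`sup_x inf_y xᵀAy = inf_y sup_x xᵀAy` over mixed strategies, both attained. -/
theorem von_neumann_minimax {m n : ℕ} (hm : 0 < m) (hn : 0 < n)
    (A : Matrix (Fin m) (Fin n) ℝ) :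
    (⨆ x : stdSimplex ℝ (Fin m), ⨅ y : stdSimplex ℝ (Fin n),
        (x : Fin m → ℝ) ⬝ᵥ A.mulVec (y : Fin n → ℝ)) =
      (⨅ y : stdSimplex ℝ (Fin n), ⨆ x : stdSimplex ℝ (Fin m),
        (x : Fin m → ℝ) ⬝ᵥ A.mulVec (y : Fin n → ℝ)) ∧
    (∃ x₀ : stdSimplex ℝ (Fin m),
      (⨅ y : stdSimplex ℝ (Fin n), (x₀ : Fin m → ℝ) ⬝ᵥ A.mulVec (y : Fin n → ℝ)) =
        ⨆ x : stdSimplex ℝ (Fin m), ⨅ y : stdSimplex ℝ (Fin n),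
          (x : Fin m → ℝ) ⬝ᵥ A.mulVec (y : Fin n → ℝ)) ∧
    (∃ y₀ : stdSimplex ℝ (Fin n),
      (⨆ x : stdSimplex ℝ (Fin m), (x : Fin m → ℝ) ⬝ᵥ A.mulVec (y₀ : Fin n → ℝ)) =
        ⨅ y : stdSimplex ℝ (Fin n), ⨆ x : stdSimplex ℝ (Fin m),
          (x : Fin m → ℝ) ⬝ᵥ A.mulVec (y : Fin n → ℝ)) := by
  haveI : Nonempty (stdSimplex ℝ (Fin m)) :=
    ⟨⟨Pi.single ⟨0, hm⟩ 1, single_mem_stdSimplex ℝ _⟩⟩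
  haveI : Nonempty (stdSimplex ℝ (Fin n)) :=
    ⟨⟨Pi.single ⟨0, hn⟩ 1, single_mem_stdSimplex ℝ _⟩⟩
  set f : stdSimplex ℝ (Fin m) → stdSimplex ℝ (Fin n) → ℝ :=
    fun x y => (x : Fin m → ℝ) ⬝ᵥ A.mulVec (y : Fin n → ℝ) with hf
  set M : ℝ := ∑ i, ∑ j, |A i j| with hM
  have hbound : ∀ x y, |f x y| ≤ M := fun x y => payoff_abs_le A x.2 y.2
  have hbddI : ∀ x, BddBelow (Set.range fun y => f x y) := fun x =>
    ⟨-M, by rintro _ ⟨y, rfl⟩; exact (abs_le.mp (hbound x y)).1⟩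
  have hbddS : ∀ y, BddAbove (Set.range fun x => f x y) := fun y =>
    ⟨M, by rintro _ ⟨x, rfl⟩; exact (abs_le.mp (hbound x y)).2⟩
  have hbddW : BddAbove (Set.range fun x => ⨅ y, f x y) := by
    refine ⟨M, ?_⟩
    rintro _ ⟨x, rfl⟩
    exact (ciInf_le (hbddI x) (Classical.arbitrary _)).trans
      (abs_le.mp (hbound x _)).2
  have hbddV : BddBelow (Set.range fun y => ⨆ x, f x y) := by
    refine ⟨-M, ?_⟩
    rintro _ ⟨y, rfl⟩
    exact ((abs_le.mp (hbound (Classical.arbitrary _) y)).1).trans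
      (le_ciSup (hbddS y) _)
  set W : ℝ := ⨆ x, ⨅ y, f x y with hW
  set V : ℝ := ⨅ y, ⨆ x, f x y with hV
  have hweak : W ≤ V := by
    refine le_ciInf fun y => ciSup_le fun x => ?_
    exact (ciInf_le (hbddI x) y).trans (le_ciSup (hbddS y) x)
  obtain ⟨x₀, hx₀⟩ := exists_good_row hm hn A
  have hx₀' : ∀ y, V ≤ f x₀ y := hx₀
  have hVW : V ≤ W := (le_ciInf hx₀').trans (le_ciSup hbddW x₀)
  have heq : W = V := le_antisymm hweak hVW
  obtain ⟨y₀, hy₀⟩ := exists_good_row hn hm (-Aᵀ)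
  have hident : ∀ (x : stdSimplex ℝ (Fin m)) (y : stdSimplex ℝ (Fin n)),
      (y : Fin n → ℝ) ⬝ᵥ (-Aᵀ).mulVec (x : Fin m → ℝ) = -f x y := by
    intro x y
    rw [Matrix.neg_mulVec, dotProduct_neg, Matrix.mulVec_transpose,
      dotProduct_comm, ← Matrix.dotProduct_mulVec]
  simp only [hident] at hy₀
  have hinner : ∀ x : stdSimplex ℝ (Fin m), (⨆ y, -f x y) = -⨅ y, f x y :=
    fun x => mySup_neg _ (hbddI x)
  have houter : (⨅ x, ⨆ y, -f x y) = -W := by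
    rw [iInf_congr hinner]
    exact myInf_neg _ hbddW
  rw [houter] at hy₀
  have hy₀' : ∀ x, f x y₀ ≤ W := fun x => by
    have := hy₀ x
    linarith
  refine ⟨heq, ⟨x₀, ?_⟩, ⟨y₀, ?_⟩⟩
  · exact le_antisymm (le_ciSup hbddW x₀) (heq ▸ le_ciInf hx₀')
  · refine le_antisymm ?_ (ciInf_le hbddV y₀)
    calc (⨆ x, f x y₀) ≤ W := ciSup_le hy₀'
      _ = V := heq
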